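/- Method of bi-characteristics for the Hamilton–Jacobi equation with background flow: let w : ℝ × ℝ^d → ℝ^d be continuously differentiable and let φ : ℝ × ℝ^d → ℝ be twice continuously differentiable and satisfy ∂_t φ(t,x) + (1/2)‖∇_x φ(t,x)‖² + ⟨∇_x φ(t,x), w(t,x)⟩ = 0 for all (t,x). Suppose X : [0,1] → ℝ^d is differentiable and satisfies Ẋ(t) = ∇_x φ(t, X(t)) + w(t, X(t)). Then the function q(t) := ∇_x φ(t, X(t)) is differentiable and satisfies the adjoint equation q̇(t) = −(D_x w(t, X(t)))^T q(t) for all t ∈ [0,1], where D_x w denotes the spatial Jacobian matrix of w. -/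

import Mathlib

open scoped RealInnerProductSpace

set_option maxHeartbeats 2000000 in
/-- **Method of bi-characteristics for the Hamilton–Jacobi equation with background flow.**
If `φ` is a C² solution of `∂ₜφ + (1/2)‖∇ₓφ‖² + ⟨∇ₓφ, w⟩ = 0` with `w` a C¹ vector field
(with spatial Fréchet derivative `Dw`), and `X` solves `Ẋ(t) = ∇ₓφ(t, X(t)) + w(t, X(t))` on
`[0,1]`, then `q(t) := ∇ₓφ(t, X(t))` satisfies the adjoint equation
`q̇(t) = −(Dₓw(t, X(t)))ᵀ q(t)`. -/
theorem bicharacteristics_adjoint_equation (d : ℕ)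
    (w : ℝ → EuclideanSpace ℝ (Fin d) → EuclideanSpace ℝ (Fin d))
    (Dw : ℝ → EuclideanSpace ℝ (Fin d) →
      (EuclideanSpace ℝ (Fin d) →L[ℝ] EuclideanSpace ℝ (Fin d)))
    (hw : ContDiff ℝ 1 (Function.uncurry w))
    (hDw : ∀ t x, HasFDerivAt (w t) (Dw t x) x)
    (φ : ℝ → EuclideanSpace ℝ (Fin d) → ℝ)
    (hφ : ContDiff ℝ 2 (Function.uncurry φ))
    (hHJ : ∀ t x, deriv (fun s => φ s x) t
      + (1 / 2) * ‖gradient (φ t) x‖ ^ 2 + ⟪gradient (φ t) x, w t x⟫ = 0)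
    (X : ℝ → EuclideanSpace ℝ (Fin d))
    (hX : ∀ t ∈ Set.Icc (0 : ℝ) 1,
      HasDerivAt X (gradient (φ t) (X t) + w t (X t)) t) :
    ∀ t ∈ Set.Icc (0 : ℝ) 1,
      HasDerivAt (fun s => gradient (φ s) (X s))
        (-(ContinuousLinearMap.adjoint (Dw t (X t))) (gradient (φ t) (X t))) t := by
  set Φ := Function.uncurry φ with hΦdef
  have hΦd : Differentiable ℝ Φ := hφ.differentiable (by norm_num)
  have hf' : ∀ p, HasFDerivAt Φ (fderiv ℝ Φ p) p := fun p => (hΦd p).hasFDerivAt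
  have hf'c : ContDiff ℝ 1 (fderiv ℝ Φ) := hφ.fderiv_right (by norm_num)
  have hf'' : ∀ p, HasFDerivAt (fderiv ℝ Φ) (fderiv ℝ (fderiv ℝ Φ) p) p :=
    fun p => ((hf'c.differentiable (by norm_num)) p).hasFDerivAt
  set f2 := fderiv ℝ (fderiv ℝ Φ) with hf2def
  have hsymm : ∀ p u v, f2 p u v = f2 p v u := fun p u v =>
    second_derivative_symmetric hf' (hf'' p) u v
  -- the Riesz map sending T to the representative of its spatial part
  let L : ((ℝ × EuclideanSpace ℝ (Fin d)) →L[ℝ] ℝ) →L[ℝ] EuclideanSpace ℝ (Fin d) :=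
    LinearMap.toContinuousLinearMap
      { toFun := fun T => (InnerProductSpace.toDual ℝ _).symm
          (T.comp (ContinuousLinearMap.inr ℝ ℝ _))
        map_add' := by intros; simp [ContinuousLinearMap.add_comp]
        map_smul' := by intros; simp [ContinuousLinearMap.smul_comp] }
  have hL : ∀ (T : (ℝ × EuclideanSpace ℝ (Fin d)) →L[ℝ] ℝ) v, ⟪L T, v⟫ = T (0, v) := by
    intro T v
    simp [L, InnerProductSpace.toDual_symm_apply]
  set G : ℝ × EuclideanSpace ℝ (Fin d) → EuclideanSpace ℝ (Fin d) :=
    fun p => L (fderiv ℝ Φ p) with hGdef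
  have hcurve : ∀ (s : ℝ) (x : EuclideanSpace ℝ (Fin d)),
      HasFDerivAt (fun y : EuclideanSpace ℝ (Fin d) => (s, y))
      (ContinuousLinearMap.inr ℝ ℝ _) x := fun s x => hasFDerivAt_prodMk_right s x
  have hgrad : ∀ s x, gradient (φ s) x = G (s, x) := by
    intro s x
    refine HasGradientAt.gradient ?_
    have h1 : HasFDerivAt (φ s)
        ((fderiv ℝ Φ (s, x)).comp (ContinuousLinearMap.inr ℝ ℝ _)) x :=
      (hf' (s, x)).comp x (hcurve s x)
    rw [hasFDerivAt_iff_hasGradientAt] at h1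
    exact h1
  -- spatial differentiation of the Hamilton-Jacobi equation
  have key : ∀ (s : ℝ) (x v : EuclideanSpace ℝ (Fin d)),
      f2 (s, x) (1, G (s, x) + w s x) (0, v)
        = ⟪-(ContinuousLinearMap.adjoint (Dw s x)) (G (s, x)), v⟫ := by
    intro s x v
    have haval : ∀ y, deriv (fun s' => φ s' y) s = fderiv ℝ Φ (s, y) (1, 0) := by
      intro y
      have hc : HasDerivAt (fun s' : ℝ => (s', y)) ((1:ℝ), (0 : EuclideanSpace ℝ (Fin d))) s :=
        (hasDerivAt_id s).prodMk (hasDerivAt_const s y)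
      exact ((hf' (s, y)).comp_hasDerivAt s hc).deriv
    have hGx : ∀ y, HasFDerivAt (fun z => G (s, z))
        ((L.comp (f2 (s, y))).comp (ContinuousLinearMap.inr ℝ ℝ _)) y := fun y =>
      (L.hasFDerivAt.comp _ (hf'' (s, y))).comp y (hcurve s y)
    have ha : HasFDerivAt (fun y => deriv (fun s' => φ s' y) s)
        (((ContinuousLinearMap.apply ℝ ℝ ((1:ℝ), (0 : EuclideanSpace ℝ (Fin d)))).comp
          (f2 (s, x))).comp (ContinuousLinearMap.inr ℝ ℝ _)) x := by
      have h2 : HasFDerivAt (fun y : EuclideanSpace ℝ (Fin d) => fderiv ℝ Φ (s, y) (1, 0))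
          (((ContinuousLinearMap.apply ℝ ℝ ((1:ℝ), (0 : EuclideanSpace ℝ (Fin d)))).comp
            (f2 (s, x))).comp (ContinuousLinearMap.inr ℝ ℝ _)) x :=
        (((ContinuousLinearMap.apply ℝ ℝ ((1:ℝ), (0 : EuclideanSpace ℝ (Fin d)))).hasFDerivAt.comp
          _ (hf'' (s, x))).comp x (hcurve s x))
      simpa only [haval] using h2
    have hb : HasFDerivAt (fun y => (1/2 : ℝ) * ⟪G (s, y), G (s, y)⟫)
        ((1/2 : ℝ) • ((fderivInnerCLM ℝ (G (s, x), G (s, x))).comp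
          (((L.comp (f2 (s, x))).comp (ContinuousLinearMap.inr ℝ ℝ _)).prod
           ((L.comp (f2 (s, x))).comp (ContinuousLinearMap.inr ℝ ℝ _))))) x :=
      ((hGx x).inner ℝ (hGx x)).const_mul (1/2 : ℝ)
    have hc : HasFDerivAt (fun y => ⟪G (s, y), w s y⟫)
        ((fderivInnerCLM ℝ (G (s, x), w s x)).comp
          (((L.comp (f2 (s, x))).comp (ContinuousLinearMap.inr ℝ ℝ _)).prod (Dw s x))) x :=
      (hGx x).inner ℝ (hDw s x)
    have hg := (ha.add hb).add hc
    have hg0 : (fun y => (deriv (fun s' => φ s' y) s + (1/2 : ℝ) * ⟪G (s, y), G (s, y)⟫)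
        + ⟪G (s, y), w s y⟫) = fun _ => (0 : ℝ) := by
      funext y
      have h := hHJ s y
      rw [hgrad s y] at h
      rw [← h, real_inner_self_eq_norm_sq]
    rw [show (((fun y => deriv (fun s' => φ s' y) s) + fun y => (1/2 : ℝ) * ⟪G (s, y), G (s, y)⟫)
        + fun y => ⟪G (s, y), w s y⟫) = fun _ => (0 : ℝ) from hg0] at hg
    have heq := hg.unique (hasFDerivAt_const 0 x)
    have hv := DFunLike.congr_fun heq v
    simp only [ContinuousLinearMap.add_apply, ContinuousLinearMap.coe_comp',
      Function.comp_apply, ContinuousLinearMap.smul_apply, fderivInnerCLM_apply,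
      ContinuousLinearMap.prod_apply, ContinuousLinearMap.inr_apply,
      ContinuousLinearMap.apply_apply, ContinuousLinearMap.zero_apply, smul_eq_mul] at hv
    have hB : fderiv ℝ Φ (s, x) (0, L (f2 (s, x) (0, v))) = f2 (s, x) (0, v) (0, G (s, x)) := by
      rw [← hL (fderiv ℝ Φ (s, x)) (L (f2 (s, x) (0, v))), real_inner_comm]
      exact hL _ _
    have hC : ⟪L (f2 (s, x) (0, v)), w s x⟫ = f2 (s, x) (0, v) (0, w s x) := hL _ _
    have hBG : ⟪G (s, x), L (f2 (s, x) (0, v))⟫ = f2 (s, x) (0, v) (0, G (s, x)) := by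
      rw [real_inner_comm]; exact hL _ _
    rw [hBG, hC, hL (f2 (s, x) (0, v)) (G (s, x))] at hv
    have hadd : ((1:ℝ), G (s, x) + w s x)
        = ((1:ℝ), (0 : EuclideanSpace ℝ (Fin d))) + ((0:ℝ), G (s, x)) + ((0:ℝ), w s x) := by
      simp [Prod.ext_iff]
    rw [hadd, map_add, map_add, ContinuousLinearMap.add_apply, ContinuousLinearMap.add_apply,
      inner_neg_left, ContinuousLinearMap.adjoint_inner_left,
      hsymm (s, x) (1, 0) (0, v), hsymm (s, x) (0, G (s, x)) (0, v),
      hsymm (s, x) (0, w s x) (0, v)]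
    linarith [hv]
  intro t ht
  have hGd : HasFDerivAt G (L.comp (f2 (t, X t))) (t, X t) :=
    L.hasFDerivAt.comp _ (hf'' (t, X t))
  have hpath : HasDerivAt (fun s => (s, X s)) ((1 : ℝ), gradient (φ t) (X t) + w t (X t)) t :=
    (hasDerivAt_id t).prodMk (hX t ht)
  have hq : HasDerivAt (fun s => G (s, X s))
      (L (f2 (t, X t) (1, gradient (φ t) (X t) + w t (X t)))) t :=
    by have := hGd.comp_hasDerivAt t hpath; exact this
  have hvec : L (f2 (t, X t) (1, gradient (φ t) (X t) + w t (X t)))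
      = -(ContinuousLinearMap.adjoint (Dw t (X t))) (gradient (φ t) (X t)) := by
    apply ext_inner_right ℝ
    intro v
    rw [hgrad t (X t), hL]
    exact key t (X t) v
  have hfun : (fun s => gradient (φ s) (X s)) = fun s => G (s, X s) :=
    funext fun s => hgrad s (X s)
  rw [hfun, ← hvec]
  exact hq
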